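/- Let Y = ξ where ξ ~ N(0, I_p) in R^p (i.e., θ = 0) and let θ* = (1 - c/‖Y‖)Y with c = (p-1)Γ((p-1)/2)/(√2 Γ(p/2)). Then the risk E‖θ*‖² equals p - [(p-1)Γ((p-1)/2)/(√2 Γ(p/2))]². -/

import Mathlib

open MeasureTheory Real Set

lemma radial_aux (p : ℕ) (hp : 2 ≤ p) (c A : ℝ) :
    (∫ y in Ioi (0:ℝ), y ^ (p-1) •
        (((1 - c / y) ^ 2 * y ^ 2) * (A * Real.exp (-(y ^ 2) / 2))))
    = A * (((1/2:ℝ) ^ (-(((p:ℝ)+1)+1)/2) * (1/2) * Real.Gamma ((((p:ℝ)+1)+1)/2))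
        - 2*c*((1/2:ℝ) ^ (-((p:ℝ)+1)/2) * (1/2) * Real.Gamma (((p:ℝ)+1)/2))
        + c^2*((1/2:ℝ) ^ (-(((p:ℝ)-1)+1)/2) * (1/2) * Real.Gamma ((((p:ℝ)-1)+1)/2))) := by
  have hb : (0:ℝ) < 1/2 := by norm_num
  have hp0 : (0:ℝ) ≤ (p:ℝ) := Nat.cast_nonneg p
  have hq1 : (-1:ℝ) < (p:ℝ)+1 := by linarith
  have hq2 : (-1:ℝ) < (p:ℝ) := by linarith
  have hq3 : (-1:ℝ) < (p:ℝ)-1 := by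
    have : (2:ℝ) ≤ p := by exact_mod_cast hp
    linarith
  have I1 := integrableOn_rpow_mul_exp_neg_mul_rpow hq1 two_pos hb
  have I2 := integrableOn_rpow_mul_exp_neg_mul_rpow hq2 two_pos hb
  have I3 := integrableOn_rpow_mul_exp_neg_mul_rpow hq3 two_pos hb
  have key : ∀ y ∈ Ioi (0:ℝ), y ^ (p-1) •
        (((1 - c / y) ^ 2 * y ^ 2) * (A * Real.exp (-(y ^ 2) / 2)))
      = A * ((y ^ ((p:ℝ)+1) * Real.exp (-(1/2) * y ^ (2:ℝ)))
          - 2*c*(y ^ (p:ℝ) * Real.exp (-(1/2) * y ^ (2:ℝ)))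
          + c^2*(y ^ ((p:ℝ)-1) * Real.exp (-(1/2) * y ^ (2:ℝ)))) := by
    intro y hy
    have hy : 0 < y := hy
    have hyn : y ≠ 0 := hy.ne'
    have e0 : Real.exp (-(1/2) * y ^ (2:ℝ)) = Real.exp (-(y ^ 2) / 2) := by
      rw [Real.rpow_two]; ring_nf
    have e1 : y ^ (p-1) = y ^ ((p:ℝ)-1) := by
      rw [← Real.rpow_natCast y (p-1), Nat.cast_sub (by omega), Nat.cast_one]
    have e2 : y ^ ((p:ℝ)) = y ^ ((p:ℝ)-1) * y := by
      rw [Real.rpow_sub hy, Real.rpow_one, div_mul_cancel₀ _ hyn]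
    have e3 : y ^ ((p:ℝ)+1) = y ^ ((p:ℝ)-1) * y * y := by
      rw [Real.rpow_add hy, Real.rpow_one, e2]
    rw [e0, e1, e2, e3, smul_eq_mul]
    have e4 : (1 - c / y) ^ 2 * y ^ 2 = y^2 - 2*c*y + c^2 := by
      field_simp; ring
    rw [e4]; ring
  have E2 : IntegrableOn
      (fun a => 2*c*(a ^ ((p:ℝ)) * Real.exp (-(1/2) * a ^ (2:ℝ)))) (Ioi 0) := I2.const_mul _
  have E3 : IntegrableOn
      (fun a => c^2*(a ^ ((p:ℝ)-1) * Real.exp (-(1/2) * a ^ (2:ℝ)))) (Ioi 0) := I3.const_mul _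
  have E12 : IntegrableOn (fun a => a ^ ((p:ℝ)+1) * Real.exp (-(1/2) * a ^ (2:ℝ))
      - 2*c*(a ^ ((p:ℝ)) * Real.exp (-(1/2) * a ^ (2:ℝ)))) (Ioi 0) := I1.sub E2
  rw [setIntegral_congr_fun measurableSet_Ioi key, integral_const_mul,
    integral_add E12 E3,
    integral_sub I1 E2, integral_const_mul, integral_const_mul,
    integral_rpow_mul_exp_neg_mul_rpow two_pos hq1 hb,
    integral_rpow_mul_exp_neg_mul_rpow two_pos hq2 hb,
    integral_rpow_mul_exp_neg_mul_rpow two_pos hq3 hb]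

/-- Let `Y = ξ` with `ξ ~ N(0, I_p)` in `ℝ^p` (i.e. `θ = 0`), and let
`θ* = (1 - c/‖Y‖)Y` with `c = (p-1)Γ((p-1)/2)/(√2 Γ(p/2))`.  Then the risk
`E‖θ*‖²` equals `p - [(p-1)Γ((p-1)/2)/(√2 Γ(p/2))]²`.  Since
`‖θ*‖² = (1 - c/‖Y‖)² ‖Y‖²`, the risk is written as a Gaussian-density integral. -/
theorem stmt_2 (p : ℕ) (hp : 2 ≤ p) (c : ℝ)
    (hc : c = ((p : ℝ) - 1) * Real.Gamma (((p : ℝ) - 1) / 2) /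
        (Real.sqrt 2 * Real.Gamma ((p : ℝ) / 2))) :
    (∫ x : Fin p → ℝ,
        ((1 - c / Real.sqrt (∑ i, x i ^ 2)) ^ 2 * (∑ i, x i ^ 2)) *
          ((2 * π) ^ (-(p : ℝ) / 2) * Real.exp (-(∑ i, x i ^ 2) / 2)))
      = (p : ℝ) - (((p : ℝ) - 1) * Real.Gamma (((p : ℝ) - 1) / 2) /
          (Real.sqrt 2 * Real.Gamma ((p : ℝ) / 2))) ^ 2 := by
  haveI : Nonempty (Fin p) := ⟨⟨0, by omega⟩⟩
  -- Step 1: move to Euclidean space, where the integrand is a function of the norm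
  have step1 : (∫ x : Fin p → ℝ,
        ((1 - c / Real.sqrt (∑ i, x i ^ 2)) ^ 2 * (∑ i, x i ^ 2)) *
          ((2 * π) ^ (-(p : ℝ) / 2) * Real.exp (-(∑ i, x i ^ 2) / 2)))
      = ∫ x : EuclideanSpace ℝ (Fin p),
          (fun r : ℝ => ((1 - c / r) ^ 2 * r ^ 2) *
            ((2 * π) ^ (-(p : ℝ) / 2) * Real.exp (-(r ^ 2) / 2))) ‖x‖ := by
    rw [← (EuclideanSpace.volume_preserving_symm_measurableEquiv_toLp (Fin p)).integral_comp
        (MeasurableEquiv.toLp 2 (Fin p → ℝ)).symm.measurableEmbedding]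
    refine integral_congr_ae (Filter.Eventually.of_forall fun x => ?_)
    have h1 : Real.sqrt (∑ i, x i ^ 2) = ‖x‖ := by
      rw [EuclideanSpace.norm_eq]; simp [Real.norm_eq_abs, sq_abs]
    have h2 : (∑ i, x i ^ 2) = ‖x‖ ^ 2 := by
      rw [← h1, Real.sq_sqrt (by positivity)]
    simp only [MeasurableEquiv.coe_toLp_symm]
    simp [h1, h2]
  -- Step 2: polar coordinates
  have polar : ∀ f : ℝ → ℝ, (∫ x : EuclideanSpace ℝ (Fin p), f ‖x‖)
      = p • ((Real.sqrt π ^ p / Real.Gamma ((p:ℝ) / 2 + 1)) : ℝ) •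
          ∫ y in Ioi (0:ℝ), y ^ (p - 1) • f y := by
    intro f
    haveI : Nontrivial (EuclideanSpace ℝ (Fin p)) := by infer_instance
    rw [MeasureTheory.integral_fun_norm_addHaar volume f]
    rw [finrank_euclideanSpace_fin, measureReal_def, EuclideanSpace.volume_ball]
    congr 1
    congr 1
    rw [Fintype.card_fin]
    simp [ENNReal.toReal_mul, ENNReal.toReal_pow,
      ENNReal.toReal_ofReal (by positivity : (0:ℝ) ≤ Real.sqrt π ^ p / Real.Gamma ((p:ℝ) / 2 + 1))]
  rw [step1, polar (fun r : ℝ => ((1 - c / r) ^ 2 * r ^ 2) *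
    ((2 * π) ^ (-(p : ℝ) / 2) * Real.exp (-(r ^ 2) / 2)))]
  rw [radial_aux p hp c _]
  -- Step 3: algebra with Gamma functions and powers
  have h2p : (2:ℝ) ≤ (p:ℝ) := by exact_mod_cast hp
  have hppos : (0:ℝ) < (p:ℝ)/2 := by linarith
  have hP : ((p:ℝ)) ≠ 0 := by positivity
  have hG : 0 < Real.Gamma ((p:ℝ)/2) := Real.Gamma_pos_of_pos hppos
  have hH : 0 < Real.Gamma (((p:ℝ)+1)/2) := Real.Gamma_pos_of_pos (by linarith)
  have hsq2 : Real.sqrt 2 * Real.sqrt 2 = 2 := Real.mul_self_sqrt (by norm_num)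
  -- Gamma recurrences
  have g1 : Real.Gamma ((((p:ℝ)+1)+1)/2) = ((p:ℝ)/2) * Real.Gamma ((p:ℝ)/2) := by
    rw [show (((p:ℝ)+1)+1)/2 = (p:ℝ)/2 + 1 by ring, Real.Gamma_add_one hppos.ne']
  have g2 : Real.Gamma ((((p:ℝ)-1)+1)/2) = Real.Gamma ((p:ℝ)/2) := by norm_num
  have g3 : ((p:ℝ)-1) * Real.Gamma (((p:ℝ)-1)/2) = 2 * Real.Gamma (((p:ℝ)+1)/2) := by
    have h : (((p:ℝ)-1)/2) ≠ 0 := by intro h'; nlinarith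
    rw [show ((p:ℝ)+1)/2 = ((p:ℝ)-1)/2 + 1 by ring, Real.Gamma_add_one h]
    ring
  have hcG : c * Real.Gamma ((p:ℝ)/2) = Real.sqrt 2 * Real.Gamma (((p:ℝ)+1)/2) := by
    have hcc : c = Real.sqrt 2 * Real.Gamma (((p:ℝ)+1)/2) / Real.Gamma ((p:ℝ)/2) := by
      rw [hc, g3, div_eq_div_iff (by positivity) hG.ne']
      linear_combination -Real.Gamma (((p:ℝ)+1)/2) * Real.Gamma ((p:ℝ)/2) * hsq2
    rw [hcc, div_mul_cancel₀ _ hG.ne']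
  -- powers of 2 and π
  have hpi : (0:ℝ) < π := pi_pos
  have sqpi : Real.sqrt π ^ p = π ^ ((p:ℝ)/2) := by
    rw [Real.sqrt_eq_rpow, ← Real.rpow_natCast (π ^ ((1:ℝ)/2)) p, ← Real.rpow_mul hpi.le]
    congr 1; ring
  have h2pi : ((2*π:ℝ)) ^ (-(p:ℝ)/2) = (2:ℝ) ^ (-(p:ℝ)/2) * π ^ (-(p:ℝ)/2) :=
    Real.mul_rpow (by norm_num) hpi.le
  have hhalf : ∀ x : ℝ, ((1/2:ℝ)) ^ x = (2:ℝ) ^ (-x) := by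
    intro x
    rw [show (1/2:ℝ) = 2⁻¹ by norm_num, ← Real.rpow_neg_one (2:ℝ),
      ← Real.rpow_mul (by norm_num)]
    ring_nf
  have e1 : (1/2:ℝ) ^ (-(((p:ℝ)+1)+1)/2) = (2:ℝ) ^ ((p:ℝ)/2) * 2 := by
    rw [hhalf, show -(-(((p:ℝ)+1)+1)/2) = (p:ℝ)/2 + 1 by ring, Real.rpow_add two_pos,
      Real.rpow_one]
  have e2 : (1/2:ℝ) ^ (-((p:ℝ)+1)/2) = (2:ℝ) ^ ((p:ℝ)/2) * Real.sqrt 2 := by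
    rw [hhalf, show -(-((p:ℝ)+1)/2) = (p:ℝ)/2 + 1/2 by ring, Real.rpow_add two_pos,
      Real.sqrt_eq_rpow]
  have e3 : (1/2:ℝ) ^ (-(((p:ℝ)-1)+1)/2) = (2:ℝ) ^ ((p:ℝ)/2) := by
    rw [hhalf, show -(-(((p:ℝ)-1)+1)/2) = (p:ℝ)/2 by ring]
  have g4 : Real.Gamma ((p:ℝ)/2 + 1) = ((p:ℝ)/2) * Real.Gamma ((p:ℝ)/2) :=
    Real.Gamma_add_one hppos.ne'
  have htinv : (2:ℝ) ^ (-(p:ℝ)/2) = ((2:ℝ) ^ ((p:ℝ)/2))⁻¹ := by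
    rw [← Real.rpow_neg (by norm_num)]; ring_nf
  have hsinv : π ^ (-(p:ℝ)/2) = (π ^ ((p:ℝ)/2))⁻¹ := by
    rw [← Real.rpow_neg hpi.le]; ring_nf
  rw [nsmul_eq_mul, smul_eq_mul, g1, g2, g4, e1, e2, e3, h2pi, sqpi, htinv, hsinv, ← hc]
  set G := Real.Gamma ((p:ℝ)/2) with hGdef
  set H := Real.Gamma (((p:ℝ)+1)/2) with hHdef
  set t := (2:ℝ) ^ ((p:ℝ)/2) with htdef
  set s := π ^ ((p:ℝ)/2) with hsdef
  have ht : t ≠ 0 := (Real.rpow_pos_of_pos two_pos _).ne'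
  have hs : s ≠ 0 := (Real.rpow_pos_of_pos hpi _).ne'
  field_simp
  linear_combination (2*c) * hcG
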